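/- Let X be a nonempty compact metric space and T : X → X a continuous mapping. Then there exists a Borel probability measure μ on X which is T-invariant, i.e. μ(T⁻¹(A)) = μ(A) for every Borel set A (equivalently, the pushforward of μ under T equals μ). -/

import Mathlib

open MeasureTheory

namespace KBproof
open Filter Function Set Topology TopologicalSpace BoundedContinuousFunction NNReal ENNReal
set_option linter.unusedSectionVars false

noncomputable section KB
variable {X : Type*} [MetricSpace X] [CompactSpace X] [Nonempty X]

/-- Cesàro average of `f` along the orbit of `x₀`, valued in `ℝ≥0∞`. -/
def kbAv (T : X → X) (x₀ : X) (n : ℕ) (f : X →ᵇ ℝ≥0) : ℝ≥0∞ :=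
  (↑(n + 1) : ℝ≥0∞)⁻¹ * ∑ k ∈ Finset.range (n + 1), (f (T^[k] x₀) : ℝ≥0∞)

lemma kbAv_mono (T : X → X) (x₀ : X) (n : ℕ) {f g : X →ᵇ ℝ≥0} (h : ∀ x, f x ≤ g x) :
    kbAv T x₀ n f ≤ kbAv T x₀ n g := by
  unfold kbAv
  gcongr with k _
  exact_mod_cast h _

lemma kbAv_add (T : X → X) (x₀ : X) (n : ℕ) (f g : X →ᵇ ℝ≥0) :
    kbAv T x₀ n (f + g) = kbAv T x₀ n f + kbAv T x₀ n g := by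
  unfold kbAv
  rw [← mul_add, ← Finset.sum_add_distrib]
  simp [ENNReal.coe_add]

lemma kbAv_smul (T : X → X) (x₀ : X) (n : ℕ) (c : ℝ≥0) (f : X →ᵇ ℝ≥0) :
    kbAv T x₀ n (c • f) = (c : ℝ≥0∞) * kbAv T x₀ n f := by
  unfold kbAv
  rw [Finset.mul_sum, Finset.mul_sum, Finset.mul_sum]
  refine Finset.sum_congr rfl fun k _ => ?_
  simp only [BoundedContinuousFunction.coe_smul, Pi.smul_apply, smul_eq_mul, ENNReal.coe_mul]
  ring

lemma kbAv_one (T : X → X) (x₀ : X) (n : ℕ) :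
    kbAv T x₀ n (1 : X →ᵇ ℝ≥0) = 1 := by
  have h : ∀ k, ((1 : X →ᵇ ℝ≥0) (T^[k] x₀) : ℝ≥0∞) = 1 := fun k => by simp
  simp only [kbAv, h, Finset.sum_const, Finset.card_range, nsmul_eq_mul, mul_one]
  exact ENNReal.inv_mul_cancel (by exact_mod_cast Nat.succ_ne_zero n) (by simp)

/-- Any bounded continuous `ℝ≥0`-valued function is bounded by a constant. -/
lemma kb_exists_bound (f : X →ᵇ ℝ≥0) : ∃ C : ℝ≥0, ∀ x, f x ≤ C := by
  obtain ⟨C, hC⟩ := f.bounded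
  inhabit X
  refine ⟨Real.toNNReal C + f default, fun x => ?_⟩
  have h := hC x default
  rw [NNReal.dist_eq] at h
  have h2 : (f x : ℝ) ≤ C + (f default : ℝ) := by
    have := abs_sub_abs_le_abs_sub (f x : ℝ) (f default : ℝ)
    simp only [abs_of_nonneg (f x).coe_nonneg, abs_of_nonneg (f default).coe_nonneg] at this
    linarith [this.trans h]
  have hCle : C ≤ (Real.toNNReal C : ℝ) := Real.le_coe_toNNReal C
  rw [← NNReal.coe_le_coe]
  push_cast
  linarith

lemma kbAv_le_const (T : X → X) (x₀ : X) (n : ℕ) {f : X →ᵇ ℝ≥0} {C : ℝ≥0}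
    (hC : ∀ x, f x ≤ C) : kbAv T x₀ n f ≤ C := by
  unfold kbAv
  have h1 : ∑ k ∈ Finset.range (n + 1), (f (T^[k] x₀) : ℝ≥0∞)
      ≤ (↑(n + 1) : ℝ≥0∞) * C := by
    calc ∑ k ∈ Finset.range (n + 1), (f (T^[k] x₀) : ℝ≥0∞)
        ≤ ∑ _k ∈ Finset.range (n + 1), (C : ℝ≥0∞) :=
          Finset.sum_le_sum fun k _ => ENNReal.coe_le_coe.2 (hC _)
      _ = (↑(n + 1) : ℝ≥0∞) * C := by
          simp [Finset.sum_const, Finset.card_range, nsmul_eq_mul]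
  calc (↑(n + 1) : ℝ≥0∞)⁻¹ * ∑ k ∈ Finset.range (n + 1), (f (T^[k] x₀) : ℝ≥0∞)
      ≤ (↑(n + 1) : ℝ≥0∞)⁻¹ * ((↑(n + 1) : ℝ≥0∞) * C) := by gcongr
    _ = C := by
        rw [← mul_assoc,
          ENNReal.inv_mul_cancel (by exact_mod_cast Nat.succ_ne_zero n) (by simp), one_mul]

lemma kbAv_def (T : X → X) (x₀ : X) (n : ℕ) (f : X →ᵇ ℝ≥0) :
    kbAv T x₀ n f = (↑(n + 1) : ℝ≥0∞)⁻¹ * ∑ k ∈ Finset.range (n + 1), (f (T^[k] x₀) : ℝ≥0∞) :=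
  rfl

/-- Shifted-sum comparison: averaging `f ∘ T` vs averaging `f`. -/
lemma kbAv_comp_le (T : X → X) (hT : Continuous T) (x₀ : X) (n : ℕ)
    {f : X →ᵇ ℝ≥0} {C : ℝ≥0} (hC : ∀ x, f x ≤ C) :
    kbAv T x₀ n (f.compContinuous ⟨T, hT⟩) ≤ kbAv T x₀ n f + (↑(n + 1) : ℝ≥0∞)⁻¹ * C ∧
    kbAv T x₀ n f ≤ kbAv T x₀ n (f.compContinuous ⟨T, hT⟩) + (↑(n + 1) : ℝ≥0∞)⁻¹ * C := by
  set g : ℕ → ℝ≥0∞ := fun k => (f (T^[k] x₀) : ℝ≥0∞) with hg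
  have hcomp : ∀ k, ((f.compContinuous ⟨T, hT⟩) (T^[k] x₀) : ℝ≥0∞) = g (k + 1) := by
    intro k
    simp only [hg, BoundedContinuousFunction.compContinuous_apply, ContinuousMap.coe_mk]
    rw [← Function.iterate_succ_apply' T k x₀]
  have hS : (∑ k ∈ Finset.range (n + 1), g (k + 1)) + g 0
      = (∑ k ∈ Finset.range (n + 1), g k) + g (n + 1) := by
    rw [← Finset.sum_range_succ' g (n + 1), Finset.sum_range_succ g (n + 1)]
  have hgC : ∀ k, g k ≤ (C : ℝ≥0∞) := fun k => ENNReal.coe_le_coe.2 (hC _)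
  have h1 : ∑ k ∈ Finset.range (n + 1), g (k + 1)
      ≤ (∑ k ∈ Finset.range (n + 1), g k) + C := by
    calc ∑ k ∈ Finset.range (n + 1), g (k + 1)
        ≤ (∑ k ∈ Finset.range (n + 1), g (k + 1)) + g 0 := le_self_add
      _ = (∑ k ∈ Finset.range (n + 1), g k) + g (n + 1) := hS
      _ ≤ (∑ k ∈ Finset.range (n + 1), g k) + C := by gcongr; exact hgC _
  have h2 : ∑ k ∈ Finset.range (n + 1), g k
      ≤ (∑ k ∈ Finset.range (n + 1), g (k + 1)) + C := by
    calc ∑ k ∈ Finset.range (n + 1), g k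
        ≤ (∑ k ∈ Finset.range (n + 1), g k) + g (n + 1) := le_self_add
      _ = (∑ k ∈ Finset.range (n + 1), g (k + 1)) + g 0 := hS.symm
      _ ≤ (∑ k ∈ Finset.range (n + 1), g (k + 1)) + C := by gcongr; exact hgC _
  have hAvc : kbAv T x₀ n (f.compContinuous ⟨T, hT⟩)
      = (↑(n + 1) : ℝ≥0∞)⁻¹ * ∑ k ∈ Finset.range (n + 1), g (k + 1) := by
    rw [kbAv_def]
    congr 1
    exact Finset.sum_congr rfl fun k _ => hcomp k
  have hAvf : kbAv T x₀ n f
      = (↑(n + 1) : ℝ≥0∞)⁻¹ * ∑ k ∈ Finset.range (n + 1), g k := kbAv_def ..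
  constructor
  · rw [hAvc, hAvf, ← mul_add]
    gcongr
  · rw [hAvc, hAvf, ← mul_add]
    gcongr
/-- The ultrafilter limit of the Cesàro averages. -/
def kbL (T : X → X) (x₀ : X) (𝒰 : Ultrafilter ℕ) (f : X →ᵇ ℝ≥0) : ℝ≥0∞ :=
  limUnder 𝒰 (fun n => kbAv T x₀ n f)

lemma kbL_tendsto (T : X → X) (x₀ : X) (𝒰 : Ultrafilter ℕ) (f : X →ᵇ ℝ≥0) :
    Tendsto (fun n => kbAv T x₀ n f) 𝒰 (𝓝 (kbL T x₀ 𝒰 f)) := by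
  apply tendsto_nhds_limUnder
  obtain ⟨a, -, ha⟩ := isCompact_univ.ultrafilter_le_nhds
    (𝒰.map fun n => kbAv T x₀ n f) (by simp)
  exact ⟨a, by rwa [Ultrafilter.coe_map] at ha⟩

lemma kbL_mono (T : X → X) (x₀ : X) (𝒰 : Ultrafilter ℕ) {f g : X →ᵇ ℝ≥0}
    (h : ∀ x, f x ≤ g x) : kbL T x₀ 𝒰 f ≤ kbL T x₀ 𝒰 g :=
  le_of_tendsto_of_tendsto' (kbL_tendsto T x₀ 𝒰 f) (kbL_tendsto T x₀ 𝒰 g)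
    fun n => kbAv_mono T x₀ n h

lemma kbL_add (T : X → X) (x₀ : X) (𝒰 : Ultrafilter ℕ) (f g : X →ᵇ ℝ≥0) :
    kbL T x₀ 𝒰 (f + g) = kbL T x₀ 𝒰 f + kbL T x₀ 𝒰 g := by
  refine tendsto_nhds_unique (kbL_tendsto T x₀ 𝒰 (f + g)) ?_
  have := (kbL_tendsto T x₀ 𝒰 f).add (kbL_tendsto T x₀ 𝒰 g)
  simpa only [← kbAv_add T x₀ _ f g] using this

lemma kbL_smul (T : X → X) (x₀ : X) (𝒰 : Ultrafilter ℕ) (c : ℝ≥0) (f : X →ᵇ ℝ≥0) :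
    kbL T x₀ 𝒰 (c • f) = (c : ℝ≥0∞) * kbL T x₀ 𝒰 f := by
  refine tendsto_nhds_unique (kbL_tendsto T x₀ 𝒰 (c • f)) ?_
  have := ENNReal.Tendsto.const_mul (kbL_tendsto T x₀ 𝒰 f)
    (Or.inr (ENNReal.coe_ne_top (r := c)))
  simpa only [← kbAv_smul T x₀ _ c f] using this

lemma kbL_one (T : X → X) (x₀ : X) (𝒰 : Ultrafilter ℕ) :
    kbL T x₀ 𝒰 (1 : X →ᵇ ℝ≥0) = 1 := by
  refine tendsto_nhds_unique (kbL_tendsto T x₀ 𝒰 1) ?_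
  simpa only [kbAv_one T x₀] using (tendsto_const_nhds : Tendsto (fun _ : ℕ => (1 : ℝ≥0∞)) 𝒰 _)

lemma kbL_le_const (T : X → X) (x₀ : X) (𝒰 : Ultrafilter ℕ) {f : X →ᵇ ℝ≥0} {C : ℝ≥0}
    (hC : ∀ x, f x ≤ C) : kbL T x₀ 𝒰 f ≤ C :=
  le_of_tendsto (kbL_tendsto T x₀ 𝒰 f) (Eventually.of_forall fun n => kbAv_le_const T x₀ n hC)

lemma kbL_ne_top (T : X → X) (x₀ : X) (𝒰 : Ultrafilter ℕ) (f : X →ᵇ ℝ≥0) :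
    kbL T x₀ 𝒰 f ≠ ∞ := by
  obtain ⟨C, hC⟩ := kb_exists_bound f
  exact ((kbL_le_const T x₀ 𝒰 hC).trans_lt ENNReal.coe_lt_top).ne

lemma kbL_comp (T : X → X) (hT : Continuous T) (x₀ : X) (𝒰 : Ultrafilter ℕ)
    (h𝒰 : (𝒰 : Filter ℕ) ≤ atTop) (f : X →ᵇ ℝ≥0) :
    kbL T x₀ 𝒰 (f.compContinuous ⟨T, hT⟩) = kbL T x₀ 𝒰 f := by
  obtain ⟨C, hC⟩ := kb_exists_bound f
  have herr : Tendsto (fun n : ℕ => (↑(n + 1) : ℝ≥0∞)⁻¹ * C) (𝒰 : Filter ℕ) (𝓝 0) := by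
    refine Tendsto.mono_left ?_ h𝒰
    have h0 : Tendsto (fun n : ℕ => (↑(n + 1) : ℝ≥0∞)⁻¹) atTop (𝓝 0) := by
      have := ENNReal.tendsto_inv_nat_nhds_zero.comp (tendsto_add_atTop_nat 1)
      have heq : ((fun n : ℕ => ((n : ℝ≥0∞))⁻¹) ∘ fun a => a + 1)
          = fun n : ℕ => (↑(n + 1) : ℝ≥0∞)⁻¹ := by
        funext n; simp
      rwa [heq] at this
    simpa using ENNReal.Tendsto.mul_const h0 (Or.inr (ENNReal.coe_ne_top (r := C)))
  have hca := (kbL_tendsto T x₀ 𝒰 f).add herr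
  have hcb := (kbL_tendsto T x₀ 𝒰 (f.compContinuous ⟨T, hT⟩)).add herr
  rw [add_zero] at hca hcb
  refine le_antisymm ?_ ?_
  · exact le_of_tendsto_of_tendsto' (kbL_tendsto T x₀ 𝒰 _) hca
      fun n => (kbAv_comp_le T hT x₀ n hC).1
  · exact le_of_tendsto_of_tendsto' (kbL_tendsto T x₀ 𝒰 f) hcb
      fun n => (kbAv_comp_le T hT x₀ n hC).2

/-- The invariant positive linear functional. -/
def kbLam (T : X → X) (x₀ : X) (𝒰 : Ultrafilter ℕ) : (X →ᵇ ℝ≥0) →ₗ[ℝ≥0] ℝ≥0 where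
  toFun f := (kbL T x₀ 𝒰 f).toNNReal
  map_add' f g := by
    show (kbL T x₀ 𝒰 (f + g)).toNNReal = _
    rw [kbL_add]
    exact ENNReal.toNNReal_add (kbL_ne_top T x₀ 𝒰 f) (kbL_ne_top T x₀ 𝒰 g)
  map_smul' c f := by
    show (kbL T x₀ 𝒰 (c • f)).toNNReal = _
    rw [kbL_smul]
    simp [ENNReal.toNNReal_mul]

lemma kbLam_mono (T : X → X) (x₀ : X) (𝒰 : Ultrafilter ℕ) {f g : X →ᵇ ℝ≥0}
    (h : ∀ x, f x ≤ g x) : kbLam T x₀ 𝒰 f ≤ kbLam T x₀ 𝒰 g :=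
  ENNReal.toNNReal_mono (kbL_ne_top T x₀ 𝒰 g) (kbL_mono T x₀ 𝒰 h)

lemma kbLam_one (T : X → X) (x₀ : X) (𝒰 : Ultrafilter ℕ) :
    kbLam T x₀ 𝒰 (1 : X →ᵇ ℝ≥0) = 1 := by
  simp [kbLam, kbL_one]

lemma kbLam_comp (T : X → X) (hT : Continuous T) (x₀ : X) (𝒰 : Ultrafilter ℕ)
    (h𝒰 : (𝒰 : Filter ℕ) ≤ atTop) (f : X →ᵇ ℝ≥0) :
    kbLam T x₀ 𝒰 (f.compContinuous ⟨T, hT⟩) = kbLam T x₀ 𝒰 f := by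
  simp [kbLam, kbL_comp T hT x₀ 𝒰 h𝒰]
/-- The functional on compactly supported functions induced by `kbLam`. -/
def kbLamC (T : X → X) (x₀ : X) (𝒰 : Ultrafilter ℕ) :
    CompactlySupportedContinuousMap X ℝ≥0 →ₗ[ℝ≥0] ℝ≥0 where
  toFun f := kbLam T x₀ 𝒰 f.toBoundedContinuousFunction
  map_add' f g := by
    rw [← map_add]
    exact congrArg _ (by ext x; rfl)
  map_smul' c f := by
    simp only [RingHom.id_apply]
    rw [← map_smul]
    exact congrArg _ (by ext x; rfl)

lemma kbLamC_apply (T : X → X) (x₀ : X) (𝒰 : Ultrafilter ℕ)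
    (f : CompactlySupportedContinuousMap X ℝ≥0) :
    kbLamC T x₀ 𝒰 f = kbLam T x₀ 𝒰 f.toBoundedContinuousFunction := rfl

/-- A bounded continuous function as a compactly supported one (compact space). -/
def kbToCc (f : X →ᵇ ℝ≥0) : CompactlySupportedContinuousMap X ℝ≥0 :=
  CompactlySupportedContinuousMap.continuousMapEquiv f.toContinuousMap

@[simp] lemma kbToCc_apply (f : X →ᵇ ℝ≥0) (x : X) : kbToCc f x = f x := rfl

lemma kbLamC_kbToCc (T : X → X) (x₀ : X) (𝒰 : Ultrafilter ℕ) (f : X →ᵇ ℝ≥0) :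
    kbLamC T x₀ 𝒰 (kbToCc f) = kbLam T x₀ 𝒰 f := by
  rw [kbLamC_apply]
  exact congrArg _ (by ext x; rfl)

/-- A bounded continuous `ℝ≥0`-valued function built from a real-valued one. -/
def kbToNN (g : C(X, ℝ)) (hg : ∀ x, g x ∈ Icc (0:ℝ) 1) : X →ᵇ ℝ≥0 where
  toFun x := Real.toNNReal (g x)
  continuous_toFun := continuous_real_toNNReal.comp g.continuous
  map_bounded' := by
    refine ⟨1, fun x y => ?_⟩
    rw [NNReal.dist_eq]
    have hx := hg x; have hy := hg y
    rw [abs_sub_le_iff]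
    constructor <;>
    · simp only [Real.coe_toNNReal _ (hg _).1]
      linarith [hx.1, hx.2, hy.1, hy.2]

/-- Pointwise product of a bounded `ℝ≥0` function with one bounded by `1`. -/
def kbMul (f φ : X →ᵇ ℝ≥0) (C : ℝ≥0) (hC : ∀ x, f x ≤ C) (hφ : ∀ x, φ x ≤ 1) :
    X →ᵇ ℝ≥0 where
  toFun x := f x * φ x
  continuous_toFun := f.continuous.mul φ.continuous
  map_bounded' := by
    refine ⟨C, fun x y => ?_⟩
    rw [NNReal.dist_eq]
    have hx : f x * φ x ≤ C := le_trans (mul_le_mul' (hC x) (hφ x)) (by simp)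
    have hy : f y * φ y ≤ C := le_trans (mul_le_mul' (hC y) (hφ y)) (by simp)
    rw [abs_sub_le_iff]
    constructor <;>
    · push_cast
      have := (f x * φ x).coe_nonneg
      have := (f y * φ y).coe_nonneg
      have hx' : ((f x * φ x : ℝ≥0) : ℝ) ≤ C := hx
      have hy' : ((f y * φ y : ℝ≥0) : ℝ) ≤ C := hy
      have h0x : (0:ℝ) ≤ ((f x * φ x : ℝ≥0) : ℝ) := (f x * φ x).coe_nonneg
      have h0y : (0:ℝ) ≤ ((f y * φ y : ℝ≥0) : ℝ) := (f y * φ y).coe_nonneg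
      push_cast at hx' hy' h0x h0y
      linarith

/-- The Riesz content associated to the invariant functional is a `Content`. -/
def kbContent (T : X → X) (x₀ : X) (𝒰 : Ultrafilter ℕ) : Content X where
  toFun K := rieszContentAux (kbLamC T x₀ 𝒰) K
  mono' K₁ K₂ h := rieszContentAux_mono _ h
  sup_le' := rieszContentAux_sup_le _
  sup_disjoint' K₁ K₂ hd _ _ := by
    set Λ := kbLamC T x₀ 𝒰
    refine le_antisymm (rieszContentAux_sup_le _ K₁ K₂) ?_
    apply _root_.le_of_forall_pos_le_add
    intro ε εpos
    obtain ⟨f, hf, hfΛ⟩ := exists_lt_rieszContentAux_add_pos Λ (K₁ ⊔ K₂) εpos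
    obtain ⟨C, hC⟩ := kb_exists_bound f.toBoundedContinuousFunction
    obtain ⟨g, hg0, hg1, hg01⟩ :=
      exists_continuous_zero_one_of_isClosed K₁.2.isClosed K₂.2.isClosed hd
    set g' : C(X, ℝ) := ContinuousMap.mk (fun x => 1 - g x)
      (continuous_const.sub g.continuous) with hg'
    have hg01' : ∀ x, g' x ∈ Icc (0:ℝ) 1 := fun x => by
      have := hg01 x
      constructor <;> simp [hg'] <;> linarith [this.1, this.2]
    set φ₁ : X →ᵇ ℝ≥0 := kbToNN g' hg01' with hφ₁
    set φ₂ : X →ᵇ ℝ≥0 := kbToNN g (fun x => hg01 x) with hφ₂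
    have hφ₁le : ∀ x, φ₁ x ≤ 1 := fun x => by
      simp only [hφ₁, kbToNN]
      exact Real.toNNReal_le_one.2 (hg01' x).2
    have hφ₂le : ∀ x, φ₂ x ≤ 1 := fun x => by
      simp only [hφ₂, kbToNN]
      exact Real.toNNReal_le_one.2 (hg01 x).2
    set h₁ := kbMul f.toBoundedContinuousFunction φ₁ C hC hφ₁le with hh₁
    set h₂ := kbMul f.toBoundedContinuousFunction φ₂ C hC hφ₂le with hh₂
    have hsum : h₁ + h₂ = f.toBoundedContinuousFunction := by
      ext x
      have key : f x * φ₁ x + f x * φ₂ x = f x := by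
        have : φ₁ x + φ₂ x = 1 := by
          show Real.toNNReal (1 - g x) + Real.toNNReal (g x) = 1
          rw [← Real.toNNReal_add (by linarith [(hg01 x).2]) (hg01 x).1]
          norm_num
        rw [← mul_add, this, mul_one]
      have hh : (h₁ + h₂) x = f x := key
      exact_mod_cast hh
    have h1ge : ∀ x ∈ K₁, (1:ℝ≥0) ≤ h₁ x := by
      intro x hx
      have hfx : (1:ℝ≥0) ≤ f x := hf x (Or.inl hx)
      have : φ₁ x = 1 := by
        show Real.toNNReal (1 - g x) = 1
        rw [hg0 hx]
        norm_num
      show (1:ℝ≥0) ≤ f x * φ₁ x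
      rw [this, mul_one]; exact hfx
    have h2ge : ∀ x ∈ K₂, (1:ℝ≥0) ≤ h₂ x := by
      intro x hx
      have hfx : (1:ℝ≥0) ≤ f x := hf x (Or.inr hx)
      have : φ₂ x = 1 := by
        show Real.toNNReal (g x) = 1
        rw [hg1 hx]
        norm_num
      show (1:ℝ≥0) ≤ f x * φ₂ x
      rw [this, mul_one]; exact hfx
    calc rieszContentAux Λ K₁ + rieszContentAux Λ K₂
        ≤ Λ (kbToCc h₁) + Λ (kbToCc h₂) :=
          add_le_add (rieszContentAux_le Λ (f := kbToCc h₁) h1ge)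
            (rieszContentAux_le Λ (f := kbToCc h₂) h2ge)
      _ = Λ f := by
          rw [← map_add]
          exact congrArg _ (CompactlySupportedContinuousMap.ext fun x => DFunLike.congr_fun hsum x)
      _ ≤ rieszContentAux Λ (K₁ ⊔ K₂) + ε := le_of_lt hfΛ
lemma kbContent_apply (T : X → X) (x₀ : X) (𝒰 : Ultrafilter ℕ) (K : TopologicalSpace.Compacts X) :
    (kbContent T x₀ 𝒰).toFun K = rieszContentAux (kbLamC T x₀ 𝒰) K :=
  rfl

end KB

end KBproof

open KBproof Filter Function Set Topology TopologicalSpace BoundedContinuousFunction NNReal ENNReal in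
/-- Every continuous self-map of a nonempty compact metric space admits an invariant
Borel probability measure. -/
theorem exists_invariant_measure_of_continuous
    {X : Type*} [MetricSpace X] [CompactSpace X] [Nonempty X]
    [MeasurableSpace X] [BorelSpace X]
    (T : X → X) (hT : Continuous T) :
    ∃ μ : Measure X, IsProbabilityMeasure μ ∧ μ.map T = μ := by
  classical
  obtain ⟨x₀⟩ := ‹Nonempty X›
  set 𝒰 : Ultrafilter ℕ := Ultrafilter.of atTop with h𝒰def
  have h𝒰 : (𝒰 : Filter ℕ) ≤ atTop := Ultrafilter.of_le _
  set Λ := kbLamC T x₀ 𝒰 with hΛdef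
  set 𝒞 := kbContent T x₀ 𝒰 with h𝒞def
  set μ := 𝒞.measure with hμdef
  -- total mass one
  have hΛtop : rieszContentAux Λ ⟨univ, isCompact_univ⟩ = 1 := by
    apply le_antisymm
    · have h1 : ∀ x ∈ (⟨univ, isCompact_univ⟩ : Compacts X), (1:ℝ≥0) ≤ kbToCc (1 : X →ᵇ ℝ≥0) x :=
        fun x _ => by simp
      have := rieszContentAux_le Λ h1
      simpa [hΛdef, kbLamC_kbToCc, kbLam_one] using this
    · refine le_csInf (rieszContentAux_image_nonempty Λ _) ?_
      rintro b ⟨f, hf, rfl⟩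
      have h2 : kbLam T x₀ 𝒰 (1 : X →ᵇ ℝ≥0) ≤ Λ f := by
        rw [hΛdef, kbLamC_apply]
        exact kbLam_mono T x₀ 𝒰 fun x => by simpa using hf x trivial
      simpa [kbLam_one] using h2
  have hprob : IsProbabilityMeasure μ := by
    constructor
    rw [hμdef, Content.measure_apply _ MeasurableSet.univ,
      𝒞.outerMeasure_of_isOpen univ isOpen_univ,
      𝒞.innerContent_of_isCompact isCompact_univ isOpen_univ]
    show ((𝒞.toFun ⟨univ, isCompact_univ⟩ : ℝ≥0) : ℝ≥0∞) = 1
    rw [h𝒞def, kbContent_apply, hΛtop]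
    norm_cast
  -- invariance of the content under preimages
  have hcomp_content : ∀ K : Compacts X,
      rieszContentAux Λ K ≤ rieszContentAux Λ (K.map T hT) := by
    intro K
    refine le_csInf (rieszContentAux_image_nonempty Λ (K.map T hT)) ?_
    rintro b ⟨g, hg, rfl⟩
    have hgT : ∀ x ∈ K, (1:ℝ≥0) ≤ (g.toBoundedContinuousFunction.compContinuous ⟨T, hT⟩) x := by
      intro x hx
      have hTx : T x ∈ (K.map T hT : Compacts X) := by
        show T x ∈ ((K.map T hT : Compacts X) : Set X)
        rw [Compacts.coe_map]
        exact ⟨x, hx, rfl⟩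
      simpa using hg (T x) hTx
    calc rieszContentAux Λ K ≤ Λ (kbToCc (g.toBoundedContinuousFunction.compContinuous ⟨T, hT⟩)) :=
          rieszContentAux_le Λ (f := kbToCc _) hgT
      _ = Λ g := by
          rw [hΛdef, kbLamC_kbToCc, kbLamC_apply]
          exact kbLam_comp T hT x₀ 𝒰 h𝒰 _
  have hOM : ∀ A : Set X, 𝒞.outerMeasure (T ⁻¹' A) ≤ 𝒞.outerMeasure A := by
    intro A
    conv_rhs => rw [Content.outerMeasure_eq_iInf]
    refine le_iInf fun U => le_iInf fun hU => le_iInf fun hAU => ?_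
    calc 𝒞.outerMeasure (T ⁻¹' A) ≤ 𝒞.outerMeasure (T ⁻¹' U) :=
          (𝒞.outerMeasure).mono (preimage_mono hAU)
      _ = 𝒞.innerContent ⟨T ⁻¹' U, hU.preimage hT⟩ :=
          𝒞.outerMeasure_of_isOpen _ (hU.preimage hT)
      _ ≤ 𝒞.innerContent ⟨U, hU⟩ := by
          refine iSup₂_le fun K hK => ?_
          have hKU : ((K.map T hT : Compacts X) : Set X) ⊆ U := by
            rw [Compacts.coe_map]
            exact image_subset_iff.2 hK
          have hcc : (𝒞 K : ℝ≥0∞) ≤ 𝒞 (K.map T hT) := by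
            show ((𝒞.toFun K : ℝ≥0) : ℝ≥0∞) ≤ ((𝒞.toFun (K.map T hT) : ℝ≥0) : ℝ≥0∞)
            rw [h𝒞def,
              kbContent_apply, kbContent_apply]
            exact_mod_cast hcomp_content K
          exact hcc.trans (𝒞.le_innerContent _ _ hKU)
  have hTm : Measurable T := hT.measurable
  refine ⟨μ, hprob, ?_⟩
  have hmap : IsProbabilityMeasure (μ.map T) := Measure.isProbabilityMeasure_map hTm.aemeasurable
  have hle : ∀ s : Set X, MeasurableSet s → μ.map T s ≤ μ s := by
    intro s hs
    rw [Measure.map_apply hTm hs, hμdef, Content.measure_apply _ (hTm hs),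
      Content.measure_apply _ hs]
    exact hOM s
  ext s hs
  refine le_antisymm (hle s hs) ?_
  have h2 := hle sᶜ hs.compl
  rw [prob_compl_eq_one_sub hs, prob_compl_eq_one_sub hs] at h2
  exact (ENNReal.sub_le_sub_iff_left prob_le_one ENNReal.one_ne_top).1 h2
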